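/- Let $R$ be an associative unital ring and let $X_1,\dots,X_m$ be elements of $\End(\CC^N)^{\otimes m}\otimes R$ each supported in a distinct single tensor slot (i.e., $X_a = 1^{\otimes(a-1)}\otimes x_a$-type elements with coefficients in $R$ in slot $a$). Suppose that for all $a<b$ the commutator $[X_a, X_b]$ equals $P_{ab} Y_b - Y_b P_{ab}$ for some element $Y_b$ supported in slot $b$, where $P_{ab}$ is the permutation operator. Then, using $A^{(m)} P_{ab} = P_{ab} A^{(m)} = -A^{(m)}$ and the cyclic property of trace, the full trace $\mathrm{tr}_{1,\dots,m}\, A^{(m)} X_{\sigma(1)}\cdots X_{\sigma(m)}$ is independent of the permutation $\sigma\in\Sym_m$. -/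

import Mathlib

/-- The element of `End(ℂ^N)^{⊗ m} ⊗ R` supported in tensor slot `a` with coefficients `c`. -/
noncomputable def slotMat {R : Type*} [Ring R] (N m : ℕ) (a : Fin m)
    (c : Fin N → Fin N → R) : Matrix (Fin m → Fin N) (Fin m → Fin N) R :=
  fun f g => if ∀ k, k ≠ a → f k = g k then c (f a) (g a) else 0

/-- The permutation operator `P_σ` (with entries in `R`). -/
noncomputable def permMatR (R : Type*) [Ring R] (N m : ℕ) (σ : Equiv.Perm (Fin m)) :
    Matrix (Fin m → Fin N) (Fin m → Fin N) R :=
  fun f g => if f = g ∘ σ then 1 else 0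

/-- The normalized antisymmetrizer with entries in `R` (a `ℚ`-algebra). -/
noncomputable def antisymR (R : Type*) [Ring R] [Algebra ℚ R] (N m : ℕ) :
    Matrix (Fin m → Fin N) (Fin m → Fin N) R :=
  ((m.factorial : ℚ))⁻¹ •
    ∑ σ : Equiv.Perm (Fin m), (Equiv.Perm.sign σ : ℤ) • permMatR R N m σ

section
variable {R : Type*} [Ring R] (N m : ℕ)

lemma perm_mul_apply (σ : Equiv.Perm (Fin m)) (M : Matrix (Fin m → Fin N) (Fin m → Fin N) R)
    (f g : Fin m → Fin N) : (permMatR R N m σ * M) f g = M (f ∘ ⇑σ⁻¹) g := by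
  classical
  simp only [Matrix.mul_apply, permMatR]
  rw [Finset.sum_eq_single (f ∘ ⇑σ⁻¹)]
  · rw [if_pos]
    · rw [one_mul]
    · funext k; simp
  · intro b _ hb
    rw [if_neg, zero_mul]
    intro he
    exact hb (by funext k; simp [he])
  · simp

lemma mul_perm_apply (σ : Equiv.Perm (Fin m)) (M : Matrix (Fin m → Fin N) (Fin m → Fin N) R)
    (f g : Fin m → Fin N) : (M * permMatR R N m σ) f g = M f (g ∘ ⇑σ) := by
  classical
  simp only [Matrix.mul_apply, permMatR]
  rw [Finset.sum_eq_single (g ∘ ⇑σ)]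
  · rw [if_pos rfl, mul_one]
  · intro b _ hb
    rw [if_neg hb, mul_zero]
  · simp

end

section
variable {R : Type*} [Ring R] (N m : ℕ)

lemma permMatR_mul_permMatR (σ τ : Equiv.Perm (Fin m)) :
    (permMatR R N m σ : Matrix (Fin m → Fin N) (Fin m → Fin N) R) * permMatR R N m τ
      = permMatR R N m (σ.trans τ) := by
  ext f g
  rw [perm_mul_apply]
  simp only [permMatR, Equiv.coe_trans]
  apply if_congr _ rfl rfl
  constructor
  · intro he
    funext k
    have := congrFun he (σ k)
    simpa using this
  · intro he
    funext k
    have := congrFun he (σ⁻¹ k)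
    simpa using this

lemma trace_mul_perm (σ : Equiv.Perm (Fin m)) (M : Matrix (Fin m → Fin N) (Fin m → Fin N) R) :
    Matrix.trace (M * permMatR R N m σ) = Matrix.trace (permMatR R N m σ * M) := by
  simp only [Matrix.trace, Matrix.diag, perm_mul_apply, mul_perm_apply]
  exact Fintype.sum_equiv (Equiv.arrowCongr (σ⁻¹ : Equiv.Perm (Fin m)) (Equiv.refl (Fin N)))
    _ _ (by intro f; congr 1 <;> funext k <;> simp [Equiv.arrowCongr, Equiv.Perm.inv_def])
end

section
variable {R : Type*} [Ring R] [Algebra ℚ R] (N m : ℕ)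

lemma antisymR_mul_perm (τ : Equiv.Perm (Fin m)) :
    antisymR R N m * permMatR R N m τ = (Equiv.Perm.sign τ : ℤ) • antisymR R N m := by
  unfold antisymR
  rw [Matrix.smul_mul, Finset.sum_mul]
  rw [smul_comm]
  congr 1
  rw [Finset.smul_sum]
  refine Fintype.sum_equiv (Equiv.mulLeft τ) _ _ ?_
  intro ρ
  rw [smul_mul_assoc, permMatR_mul_permMatR]
  show (Equiv.Perm.sign ρ : ℤ) • permMatR R N m (τ * ρ)
      = (Equiv.Perm.sign τ : ℤ) • ((Equiv.Perm.sign (τ * ρ) : ℤ) • permMatR R N m (τ * ρ))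
  rw [smul_smul]
  congr 1
  rcases Int.units_eq_one_or (Equiv.Perm.sign τ) with h1 | h1 <;> simp [h1, map_mul]

end

section
variable {R : Type*} [Ring R] [Algebra ℚ R] (N m : ℕ)

lemma perm_mul_antisymR (τ : Equiv.Perm (Fin m)) :
    permMatR R N m τ * antisymR R N m = (Equiv.Perm.sign τ : ℤ) • antisymR R N m := by
  unfold antisymR
  rw [Matrix.mul_smul, Finset.mul_sum]
  rw [smul_comm]
  congr 1
  rw [Finset.smul_sum]
  refine Fintype.sum_equiv (Equiv.mulRight τ) _ _ ?_
  intro ρ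
  rw [mul_smul_comm, permMatR_mul_permMatR]
  show (Equiv.Perm.sign ρ : ℤ) • permMatR R N m (ρ * τ)
      = (Equiv.Perm.sign τ : ℤ) • ((Equiv.Perm.sign (ρ * τ) : ℤ) • permMatR R N m (ρ * τ))
  rw [smul_smul]
  congr 1
  rcases Int.units_eq_one_or (Equiv.Perm.sign τ) with h1 | h1 <;> simp [h1, map_mul]

lemma antisymR_mul_swap {a b : Fin m} (hab : a ≠ b) :
    antisymR R N m * permMatR R N m (Equiv.swap a b) = -antisymR R N m := by
  rw [antisymR_mul_perm, Equiv.Perm.sign_swap hab]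
  simp

lemma swap_mul_antisymR {a b : Fin m} (hab : a ≠ b) :
    permMatR R N m (Equiv.swap a b) * antisymR R N m = -antisymR R N m := by
  rw [perm_mul_antisymR, Equiv.Perm.sign_swap hab]
  simp

lemma perm_slot_commute {σ : Equiv.Perm (Fin m)} {c : Fin m} (hc : σ c = c)
    (k : Fin N → Fin N → R) :
    Commute (permMatR R N m σ) (slotMat N m c k) := by
  have hc' : σ⁻¹ c = c := by
    conv_lhs => rw [← hc]
    simp
  show _ = _
  ext f g
  rw [perm_mul_apply, mul_perm_apply]
  simp only [slotMat, Function.comp_apply, hc', hc]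
  apply if_congr _ rfl rfl
  constructor
  · intro H j hj
    have hsj : σ j ≠ c := fun he => hj (by rw [← hc] at he; exact σ.injective he)
    have := H (σ j) hsj
    simpa using this
  · intro H j hj
    have hsj : σ⁻¹ j ≠ c := fun he => hj (by
      have := congrArg σ he
      rwa [Equiv.Perm.coe_inv, Equiv.apply_symm_apply, hc] at this)
    have := H (σ⁻¹ j) hsj
    simpa using this

end

section
variable {R : Type*} [Ring R] [Algebra ℚ R] (N m : ℕ)

lemma key_zero {a b : Fin m} (hab : a ≠ b)
    (Pu Pv Y : Matrix (Fin m → Fin N) (Fin m → Fin N) R)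
    (hu : Commute (permMatR R N m (Equiv.swap a b)) Pu)
    (hv : Commute (permMatR R N m (Equiv.swap a b)) Pv) :
    Matrix.trace (antisymR R N m *
      (Pu * ((permMatR R N m (Equiv.swap a b) * Y - Y * permMatR R N m (Equiv.swap a b)) * Pv)))
      = 0 := by
  set P := permMatR R N m (Equiv.swap a b) with hP
  set A := antisymR R N m with hA
  have e1 : A * (Pu * ((P * Y) * Pv)) = -(A * (Pu * (Y * Pv))) := by
    calc A * (Pu * ((P * Y) * Pv)) = A * ((P * Pu) * (Y * Pv)) := by
          rw [hu.eq]; noncomm_ring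
      _ = (A * P) * (Pu * (Y * Pv)) := by noncomm_ring
      _ = (-A) * (Pu * (Y * Pv)) := by rw [hA, hP, antisymR_mul_swap N m hab]
      _ = -(A * (Pu * (Y * Pv))) := by noncomm_ring
  have e2 : A * (Pu * ((Y * P) * Pv)) = (A * (Pu * (Y * Pv))) * P := by
    calc A * (Pu * ((Y * P) * Pv)) = A * (Pu * (Y * (P * Pv))) := by noncomm_ring
      _ = A * (Pu * (Y * (Pv * P))) := by rw [hv.eq]
      _ = (A * (Pu * (Y * Pv))) * P := by noncomm_ring
  have expand : A * (Pu * ((P * Y - Y * P) * Pv))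
      = A * (Pu * ((P * Y) * Pv)) - A * (Pu * ((Y * P) * Pv)) := by noncomm_ring
  rw [expand, Matrix.trace_sub, e1, e2, Matrix.trace_neg, trace_mul_perm,
    show P * (A * (Pu * (Y * Pv))) = (P * A) * (Pu * (Y * Pv)) by noncomm_ring,
    hA, hP, swap_mul_antisymR N m hab]
  simp [Matrix.trace_neg]

end

section
variable {R : Type*} [Ring R] [Algebra ℚ R] (N m : ℕ)

lemma core_swap (x y : Fin m → Fin N → Fin N → R)
    (h : ∀ a b : Fin m, a < b →
      slotMat N m a (x a) * slotMat N m b (x b)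
        - slotMat N m b (x b) * slotMat N m a (x a)
      = permMatR R N m (Equiv.swap a b) * slotMat N m b (y b)
        - slotMat N m b (y b) * permMatR R N m (Equiv.swap a b))
    (u v : List (Fin m)) (a b : Fin m) (hab : a ≠ b)
    (hau : a ∉ u) (hbu : b ∉ u) (hav : a ∉ v) (hbv : b ∉ v) :
    Matrix.trace (antisymR R N m * ((u.map (fun k => slotMat N m k (x k))).prod *
      (slotMat N m a (x a) * (slotMat N m b (x b) *
        (v.map (fun k => slotMat N m k (x k))).prod))))
    = Matrix.trace (antisymR R N m * ((u.map (fun k => slotMat N m k (x k))).prod *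
      (slotMat N m b (x b) * (slotMat N m a (x a) *
        (v.map (fun k => slotMat N m k (x k))).prod)))) := by
  set X : Fin m → Matrix (Fin m → Fin N) (Fin m → Fin N) R :=
    fun k => slotMat N m k (x k) with hX
  set A := antisymR R N m with hA
  set Pu := (u.map X).prod with hPu
  set Pv := (v.map X).prod with hPv
  have hswap : ∀ (l : List (Fin m)), a ∉ l → b ∉ l →
      Commute (permMatR R N m (Equiv.swap a b)) ((l.map X).prod) := by
    intro l hal hbl
    apply Commute.list_prod_right
    intro M hM
    rcases List.mem_map.mp hM with ⟨c, hc, rfl⟩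
    refine perm_slot_commute N m (Equiv.swap_apply_of_ne_of_ne ?_ ?_) _
    · intro e; subst e; exact hal hc
    · intro e; subst e; exact hbl hc
  have hdiff : A * (Pu * (X a * (X b * Pv))) - A * (Pu * (X b * (X a * Pv)))
      = A * (Pu * ((X a * X b - X b * X a) * Pv)) := by noncomm_ring
  rw [← sub_eq_zero, ← Matrix.trace_sub, hdiff]
  rcases hab.lt_or_gt with hlt | hlt
  · rw [hX, h a b hlt]
    exact key_zero N m hab Pu Pv _ (hswap u hau hbu) (hswap v hav hbv)
  · have hcomm : X a * X b - X b * X a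
        = -(permMatR R N m (Equiv.swap a b) * slotMat N m a (y a)
            - slotMat N m a (y a) * permMatR R N m (Equiv.swap a b)) := by
      have h2 := h b a hlt
      rw [Equiv.swap_comm b a] at h2
      rw [hX, ← h2]
      noncomm_ring
    rw [hcomm,
      show A * (Pu * ((-(permMatR R N m (Equiv.swap a b) * slotMat N m a (y a)
            - slotMat N m a (y a) * permMatR R N m (Equiv.swap a b))) * Pv))
          = -(A * (Pu * ((permMatR R N m (Equiv.swap a b) * slotMat N m a (y a)
            - slotMat N m a (y a) * permMatR R N m (Equiv.swap a b)) * Pv))) by noncomm_ring,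
      Matrix.trace_neg, key_zero N m hab Pu Pv _ (hswap u hau hbu) (hswap v hav hbv), neg_zero]

end

section
variable {R : Type*} [Ring R] [Algebra ℚ R] (N m : ℕ)

lemma main_perm (x y : Fin m → Fin N → Fin N → R)
    (h : ∀ a b : Fin m, a < b →
      slotMat N m a (x a) * slotMat N m b (x b)
        - slotMat N m b (x b) * slotMat N m a (x a)
      = permMatR R N m (Equiv.swap a b) * slotMat N m b (y b)
        - slotMat N m b (y b) * permMatR R N m (Equiv.swap a b))
    {l₁ l₂ : List (Fin m)} (hp : l₁.Perm l₂) :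
    ∀ u : List (Fin m), (u ++ l₁).Nodup →
    Matrix.trace (antisymR R N m * ((u.map (fun k => slotMat N m k (x k))).prod *
        (l₁.map (fun k => slotMat N m k (x k))).prod))
      = Matrix.trace (antisymR R N m * ((u.map (fun k => slotMat N m k (x k))).prod *
        (l₂.map (fun k => slotMat N m k (x k))).prod)) := by
  induction hp with
  | nil => intro u _; rfl
  | cons a p ih =>
      intro u hn
      have e : ∀ (l : List (Fin m)),
          (u.map (fun k => slotMat N m k (x k))).prod *
            ((a::l).map (fun k => slotMat N m k (x k))).prod
          = ((u++[a]).map (fun k => slotMat N m k (x k))).prod *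
            (l.map (fun k => slotMat N m k (x k))).prod := by
        intro l
        simp [List.prod_append, mul_assoc]
      rw [e, e]
      apply ih
      rw [List.append_assoc]
      exact hn
  | swap c d l =>
      intro u hn
      rw [List.nodup_append] at hn
      obtain ⟨-, hnd, hdisj⟩ := hn
      have hdc : d ≠ c := by
        intro e; subst e; exact (List.nodup_cons.mp hnd).1 List.mem_cons_self
      have hdl : d ∉ l := fun hm => (List.nodup_cons.mp hnd).1 (List.mem_cons_of_mem _ hm)
      have hcl : c ∉ l := (List.nodup_cons.mp (List.nodup_cons.mp hnd).2).1
      have hdu : d ∉ u := fun hm => hdisj d hm d List.mem_cons_self rfl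
      have hcu : c ∉ u := fun hm => hdisj c hm c (List.mem_cons_of_mem _ List.mem_cons_self) rfl
      simp only [List.map_cons, List.prod_cons]
      exact core_swap N m x y h u l d c hdc hdu hcu hdl hcl
  | trans p₁ p₂ ih₁ ih₂ =>
      intro u hn
      rw [ih₁ u hn]
      exact ih₂ u ((p₁.append_left u).nodup_iff.mp hn)

end

/-- if `X_1, …, X_m` are supported in distinct single tensor slots and for all
`a < b` the commutator `[X_a, X_b]` equals `P_{ab} Y_b - Y_b P_{ab}` with `Y_b` supported in
slot `b`, then the full trace `tr A^{(m)} X_{σ(1)} ⋯ X_{σ(m)}` does not depend on the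
permutation `σ`. -/
theorem trace_antisym_prod_perm_invariant {R : Type*} [Ring R] [Algebra ℚ R] (N m : ℕ)
    (x y : Fin m → Fin N → Fin N → R)
    (h : ∀ a b : Fin m, a < b →
      slotMat N m a (x a) * slotMat N m b (x b)
        - slotMat N m b (x b) * slotMat N m a (x a)
      = permMatR R N m (Equiv.swap a b) * slotMat N m b (y b)
        - slotMat N m b (y b) * permMatR R N m (Equiv.swap a b))
    (σ : Equiv.Perm (Fin m)) :
    Matrix.trace (antisymR R N m *
        ((List.finRange m).map (fun k => slotMat N m (σ k) (x (σ k)))).prod)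
      = Matrix.trace (antisymR R N m *
        ((List.finRange m).map (fun k => slotMat N m k (x k))).prod) := by
  classical
  have hmap : (List.finRange m).map (fun k => slotMat N m (σ k) (x (σ k)))
      = (((List.finRange m).map ⇑σ).map (fun k => slotMat N m k (x k))) := by
    rw [List.map_map]
    rfl
  have hperm : ((List.finRange m).map ⇑σ).Perm (List.finRange m) := by
    apply List.perm_of_nodup_nodup_toFinset_eq
    · exact (List.nodup_finRange m).map σ.injective
    · exact List.nodup_finRange m
    · ext k
      simp only [List.mem_toFinset, List.mem_map, List.mem_finRange, true_and, iff_true]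
      exact ⟨σ⁻¹ k, by simp⟩
  have hmain := main_perm N m x y h hperm []
    (by simpa using (List.nodup_finRange m).map σ.injective)
  simpa [hmap] using hmain
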